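/- On finite processes (processes without replication), the congruence ≡D generated by the abelian monoid laws for parallel composition and the distribution law coincides with strong bisimilarity ~: for all finite processes F, F', we have F ≡D F' if and only if F ~ F'. -/

import Mathlib

namespace CCS

/-- Process terms over a set of actions `A`. -/
inductive Proc (A : Type) where
  | nil : Proc A
  | pre : A → Proc A → Proc A
  | par : Proc A → Proc A → Proc A
  | repl : A → Proc A → Proc A

namespace Proc

/-- Finite processes: no occurrence of replication. -/
def IsFin {A : Type} : Proc A → Prop
  | nil => True
  | pre _ p => IsFin p
  | par p q => IsFin p ∧ IsFin q
  | repl _ _ => False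

/-- Processes of the calculus: replication is applied only to prefixed
finite processes, at top level. -/
def Wf {A : Type} : Proc A → Prop
  | nil => True
  | pre _ p => IsFin p
  | par p q => Wf p ∧ Wf q
  | repl _ p => IsFin p

/-- Size: the number of prefixes. -/
def size {A : Type} : Proc A → ℕ
  | nil => 0
  | pre _ p => size p + 1
  | par p q => size p + size q
  | repl _ p => size p + 1

/-- `reps n p` is the parallel composition of `n` copies of `p`. -/
def reps {A : Type} : ℕ → Proc A → Proc A
  | 0, _ => nil
  | n+1, p => par p (reps n p)

/-- `bang F` is `!F`: for `F = α₁.F₁ | ... | αk.Fk` it is `!α₁.F₁ | ... | !αk.Fk`. -/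
def bang {A : Type} : Proc A → Proc A
  | nil => nil
  | pre a p => repl a p
  | par p q => par (bang p) (bang q)
  | repl a p => repl a p

end Proc

/-- The labelled transition system (no synchronisation). -/
inductive Step {A : Type} : Proc A → A → Proc A → Prop where
  | pre {a : A} {p : Proc A} : Step (Proc.pre a p) a p
  | repl {a : A} {p : Proc A} :
      Step (Proc.repl a p) a (Proc.par (Proc.repl a p) p)
  | parL {p : Proc A} {a : A} {p' : Proc A} (q : Proc A) :
      Step p a p' → Step (Proc.par p q) a (Proc.par p' q)
  | parR {q : Proc A} {a : A} {q' : Proc A} (p : Proc A) :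
      Step q a q' → Step (Proc.par p q) a (Proc.par p q')

/-- Strong bisimulations. -/
def IsBisim {A : Type} (R : Proc A → Proc A → Prop) : Prop :=
  Symmetric R ∧
    ∀ p q, R p q → ∀ a p', Step p a p' → ∃ q', Step q a q' ∧ R p' q'

/-- Strong bisimilarity `~`: the greatest strong bisimulation. -/
def Bisim {A : Type} (p q : Proc A) : Prop :=
  ∃ R, IsBisim R ∧ R p q

/-- The congruence `≡D`: the smallest congruence generated by the abelian
monoid laws for parallel composition (neutral element `0`) and the
distribution law `α.(F | α.F | ... | α.F) = α.F | α.F | ... | α.F`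
(with as many occurrences of `F` on both sides). -/
inductive EqD {A : Type} : Proc A → Proc A → Prop where
  | refl (p : Proc A) : EqD p p
  | symm {p q : Proc A} : EqD p q → EqD q p
  | trans {p q r : Proc A} : EqD p q → EqD q r → EqD p r
  | parComm (p q : Proc A) : EqD (Proc.par p q) (Proc.par q p)
  | parAssoc (p q r : Proc A) :
      EqD (Proc.par (Proc.par p q) r) (Proc.par p (Proc.par q r))
  | parNil (p : Proc A) : EqD (Proc.par p Proc.nil) p
  | distr (a : A) (F : Proc A) (n : ℕ) (hF : F.IsFin) :
      EqD (Proc.pre a (Proc.par F (Proc.reps n (Proc.pre a F))))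
          (Proc.reps (n + 1) (Proc.pre a F))
  | congPre (a : A) {p q : Proc A} : EqD p q → EqD (Proc.pre a p) (Proc.pre a q)
  | congPar {p p' q q' : Proc A} :
      EqD p p' → EqD q q' → EqD (Proc.par p q) (Proc.par p' q')
  | congRepl (a : A) {p q : Proc A} : EqD p q → EqD (Proc.repl a p) (Proc.repl a q)

/-- Finite (single-hole) contexts `D ::= [] | α.D | D|F`. -/
inductive FCtx (A : Type) where
  | hole : FCtx A
  | pre : A → FCtx A → FCtx A
  | par : FCtx A → Proc A → FCtx A

/-- Filling the hole of a finite context. -/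
def FCtx.fill {A : Type} : FCtx A → Proc A → Proc A
  | .hole, p => p
  | .pre a d, p => Proc.pre a (d.fill p)
  | .par d f, p => Proc.par (d.fill p) f

/-- Well-formedness of a finite context: the processes placed in parallel
are finite. -/
def FCtx.Wf {A : Type} : FCtx A → Prop
  | .hole => True
  | .pre _ d => d.Wf
  | .par d f => d.Wf ∧ f.IsFin

/-- Single-hole contexts `C ::= D | !α.D | C|P` (the hole never occurs
directly under a replication). -/
inductive Ctx (A : Type) where
  | ofD : FCtx A → Ctx A
  | repl : A → FCtx A → Ctx A
  | par : Ctx A → Proc A → Ctx A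

/-- Filling the hole of a context. -/
def Ctx.fill {A : Type} : Ctx A → Proc A → Proc A
  | .ofD d, p => d.fill p
  | .repl a d, p => Proc.repl a (d.fill p)
  | .par c q, p => Proc.par (c.fill p) q

/-- Well-formedness of a context. -/
def Ctx.Wf {A : Type} : Ctx A → Prop
  | .ofD d => d.Wf
  | .repl _ d => d.Wf
  | .par c p => c.Wf ∧ p.Wf

/-- `k` consecutive transitions. -/
inductive NSteps {A : Type} : Proc A → ℕ → Proc A → Prop where
  | zero (p : Proc A) : NSteps p 0 p
  | succ {p : Proc A} {a : A} {p' : Proc A} {k : ℕ} {q : Proc A} :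
      Step p a p' → NSteps p' k q → NSteps p (k + 1) q

/-- `P ⇒k Q`: `k` transitions from `P` reach a process `≡D Q`. -/
def Reduct {A : Type} (p : Proc A) (k : ℕ) (q : Proc A) : Prop :=
  ∃ p', NSteps p k p' ∧ EqD p' q

/-- `TopRepl S a G` holds when `!a.G` is one of the (top-level) replicated
parallel components of `S`. -/
inductive TopRepl {A : Type} : Proc A → A → Proc A → Prop where
  | repl (a : A) (p : Proc A) : TopRepl (Proc.repl a p) a p
  | parL {p : Proc A} {a : A} {r : Proc A} (q : Proc A) :
      TopRepl p a r → TopRepl (Proc.par p q) a r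
  | parR {q : Proc A} {a : A} {r : Proc A} (p : Proc A) :
      TopRepl q a r → TopRepl (Proc.par p q) a r

/-- `S` has only replicated components: `S = ∏i !αi.Si`. -/
def ReplOnly {A : Type} : Proc A → Prop
  | .nil => True
  | .pre _ _ => False
  | .par p q => ReplOnly p ∧ ReplOnly q
  | .repl _ p => p.IsFin

/-- `S ⫫ F` : for no component `!αi.Si` of `S` and no `k` do we have
`F ⇒k αi.Si`. -/
def Dis {A : Type} (S F : Proc A) : Prop :=
  ∀ a G, TopRepl S a G → ∀ k, ¬ Reduct F k (Proc.pre a G)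

/-- `S ▷ R` : there is `k > 0` with `S ⇒k S | R`. -/
def Purg {A : Type} (S R : Proc A) : Prop :=
  ∃ k, 0 < k ∧ Reduct S k (Proc.par S R)

/-- A process is a seed if no (well-formed) process of strictly smaller
size is bisimilar to it. -/
def IsSeed {A : Type} (p : Proc A) : Prop :=
  p.Wf ∧ ∀ q : Proc A, q.Wf → Bisim q p → p.size ≤ q.size

/-- The rewriting relation `⤳_T` (first argument), defined modulo `≡D` by
the axioms (B1) `C[α.F] ⤳_{!α.F|F'} C[0]` and (B2) `!α.F | !α.F | P ⤳_Q !α.F | P`. -/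
inductive Rw {A : Type} : Proc A → Proc A → Proc A → Prop where
  | B1 {a : A} {F F' : Proc A} (C : Ctx A) :
      F.IsFin → F'.Wf → C.Wf →
      Rw (Proc.par (Proc.repl a F) F') (C.fill (Proc.pre a F)) (C.fill Proc.nil)
  | B2 {a : A} {F P Q : Proc A} :
      F.IsFin → P.Wf → Q.Wf →
      Rw Q (Proc.par (Proc.repl a F) (Proc.par (Proc.repl a F) P))
           (Proc.par (Proc.repl a F) P)
  | eqD {T T' P P' Q Q' : Proc A} :
      EqD T T' → EqD P P' → Rw T' P' Q' → EqD Q Q' → Rw T P Q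

/-- `⤳*_T` : the reflexive transitive closure of `⤳_T`. -/
def RwStar {A : Type} (T : Proc A) : Proc A → Proc A → Prop :=
  Relation.ReflTransGen (Rw T)

/-- Convertibility `P ⋈ Q`: some process `T` satisfies `P ⤳*_T T` and `Q ⤳*_T T`. -/
def Convert {A : Type} (P Q : Proc A) : Prop :=
  ∃ T : Proc A, T.Wf ∧ RwStar T P T ∧ RwStar T Q T

/-- `∏i αi.Fi` for a list of prefixed components. -/
def prodPre {A : Type} (l : List (A × Proc A)) : Proc A :=
  (l.map fun x => Proc.pre x.1 x.2).foldr Proc.par Proc.nil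

/-- `∏i !αi.Fi` for a list of prefixed components. -/
def bangProd {A : Type} (l : List (A × Proc A)) : Proc A :=
  (l.map fun x => Proc.repl x.1 x.2).foldr Proc.par Proc.nil

variable {A : Type}

/- ### Bisim toolkit -/

theorem bisim_refl (p : Proc A) : Bisim p p :=
  ⟨Eq, ⟨fun _ _ h => h.symm, fun p q h a p' hs => ⟨p', h ▸ hs, rfl⟩⟩, rfl⟩

theorem bisim_symm {p q : Proc A} (h : Bisim p q) : Bisim q p := by
  obtain ⟨R, hR, hpq⟩ := h
  exact ⟨R, hR, hR.1 hpq⟩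

theorem bisim_trans {p q r : Proc A} (h1 : Bisim p q) (h2 : Bisim q r) : Bisim p r := by
  obtain ⟨R1, hR1, h1⟩ := h1
  obtain ⟨R2, hR2, h2⟩ := h2
  refine ⟨fun x z => (∃ y, R1 x y ∧ R2 y z) ∨ (∃ y, R2 x y ∧ R1 y z), ⟨?_, ?_⟩, .inl ⟨q, h1, h2⟩⟩
  · rintro x z (⟨y, hxy, hyz⟩ | ⟨y, hxy, hyz⟩)
    · exact .inr ⟨y, hR2.1 hyz, hR1.1 hxy⟩
    · exact .inl ⟨y, hR1.1 hyz, hR2.1 hxy⟩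
  · rintro x z (⟨y, hxy, hyz⟩ | ⟨y, hxy, hyz⟩) a x' hs
    · obtain ⟨y', hsy, hy⟩ := hR1.2 x y hxy a x' hs
      obtain ⟨z', hsz, hz⟩ := hR2.2 y z hyz a y' hsy
      exact ⟨z', hsz, .inl ⟨y', hy, hz⟩⟩
    · obtain ⟨y', hsy, hy⟩ := hR2.2 x y hxy a x' hs
      obtain ⟨z', hsz, hz⟩ := hR1.2 y z hyz a y' hsy
      exact ⟨z', hsz, .inr ⟨y', hy, hz⟩⟩

theorem bisim_step {p q : Proc A} (h : Bisim p q) {a p'} (hs : Step p a p') :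
    ∃ q', Step q a q' ∧ Bisim p' q' := by
  obtain ⟨R, hR, hpq⟩ := h
  obtain ⟨q', hsq, hq⟩ := hR.2 p q hpq a p' hs
  exact ⟨q', hsq, R, hR, hq⟩

/- ### Soundness -/

theorem step_reps {F : Proc A} {a b : A} {n : ℕ} {q : Proc A}
    (h : Step (Proc.reps n (Proc.pre a F)) b q) :
    b = a ∧ ∃ m, n = m + 1 ∧ EqD q (Proc.par F (Proc.reps m (Proc.pre a F))) := by
  induction n generalizing q with
  | zero => cases h
  | succ n ih =>
    cases h with
    | parL _ h => cases h; exact ⟨rfl, n, rfl, .refl _⟩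
    | parR _ h =>
      obtain ⟨rfl, m, rfl, hq⟩ := ih h
      refine ⟨rfl, m + 1, rfl, ?_⟩
      refine .trans (.congPar (.refl _) hq) ?_
      refine .trans (.symm (.parAssoc _ _ _)) ?_
      exact .trans (.congPar (.parComm _ _) (.refl _)) (.parAssoc _ _ _)

private def Transfer (p q : Proc A) : Prop :=
  ∀ a p', Step p a p' → ∃ q', Step q a q' ∧ EqD p' q'

theorem eqD_transfer {p q : Proc A} (h : EqD p q) : Transfer p q ∧ Transfer q p := by
  induction h with
  | refl p => exact ⟨fun a p' hs => ⟨p', hs, .refl _⟩, fun a p' hs => ⟨p', hs, .refl _⟩⟩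
  | symm _ ih => exact ⟨ih.2, ih.1⟩
  | trans _ _ ih1 ih2 =>
    constructor
    · intro a p' hs
      obtain ⟨q', hq, e1⟩ := ih1.1 a p' hs
      obtain ⟨r', hr, e2⟩ := ih2.1 a q' hq
      exact ⟨r', hr, e1.trans e2⟩
    · intro a p' hs
      obtain ⟨q', hq, e1⟩ := ih2.2 a p' hs
      obtain ⟨r', hr, e2⟩ := ih1.2 a q' hq
      exact ⟨r', hr, e1.trans e2⟩
  | parComm p q =>
    constructor
    · intro a x hs
      cases hs with
      | parL _ h => exact ⟨_, .parR _ h, .parComm _ _⟩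
      | parR _ h => exact ⟨_, .parL _ h, .parComm _ _⟩
    · intro a x hs
      cases hs with
      | parL _ h => exact ⟨_, .parR _ h, .parComm _ _⟩
      | parR _ h => exact ⟨_, .parL _ h, .parComm _ _⟩
  | parAssoc p q r =>
    constructor
    · intro a x hs
      cases hs with
      | parL _ h =>
        cases h with
        | parL _ h => exact ⟨_, .parL _ h, .parAssoc _ _ _⟩
        | parR _ h => exact ⟨_, .parR _ (.parL _ h), .parAssoc _ _ _⟩
      | parR _ h => exact ⟨_, .parR _ (.parR _ h), .parAssoc _ _ _⟩
    · intro a x hs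
      cases hs with
      | parL _ h => exact ⟨_, .parL _ (.parL _ h), .symm (.parAssoc _ _ _)⟩
      | parR _ h =>
        cases h with
        | parL _ h => exact ⟨_, .parL _ (.parR _ h), .symm (.parAssoc _ _ _)⟩
        | parR _ h => exact ⟨_, .parR _ h, .symm (.parAssoc _ _ _)⟩
  | parNil p =>
    constructor
    · intro a x hs
      cases hs with
      | parL _ h => exact ⟨_, h, .parNil _⟩
      | parR _ h => cases h
    · intro a x hs
      exact ⟨_, .parL _ hs, .symm (.parNil _)⟩
  | distr a F n hF =>
    constructor
    · intro b x hs
      cases hs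
      exact ⟨_, .parL _ .pre, .refl _⟩
    · intro b x hs
      obtain ⟨rfl, m, hm, hq⟩ := step_reps hs
      obtain rfl : m = n := by omega
      exact ⟨_, .pre, hq⟩
  | congPre a h ih =>
    constructor
    · intro b x hs
      cases hs
      exact ⟨_, .pre, h⟩
    · intro b x hs
      cases hs
      exact ⟨_, .pre, h.symm⟩
  | congPar h1 h2 ih1 ih2 =>
    constructor
    · intro a x hs
      cases hs with
      | parL _ h =>
        obtain ⟨q', hq, e⟩ := ih1.1 a _ h
        exact ⟨_, .parL _ hq, .congPar e h2⟩
      | parR _ h =>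
        obtain ⟨q', hq, e⟩ := ih2.1 a _ h
        exact ⟨_, .parR _ hq, .congPar h1 e⟩
    · intro a x hs
      cases hs with
      | parL _ h =>
        obtain ⟨q', hq, e⟩ := ih1.2 a _ h
        exact ⟨_, .parL _ hq, .congPar e h2.symm⟩
      | parR _ h =>
        obtain ⟨q', hq, e⟩ := ih2.2 a _ h
        exact ⟨_, .parR _ hq, .congPar h1.symm e⟩
  | congRepl a h ih =>
    constructor
    · intro b x hs
      cases hs
      exact ⟨_, .repl, .congPar (.congRepl a h) h⟩
    · intro b x hs
      cases hs
      exact ⟨_, .repl, .congPar (.congRepl a h.symm) h.symm⟩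

theorem isBisim_eqD : IsBisim (EqD (A := A)) :=
  ⟨fun _ _ h => h.symm, fun p q h a p' hs => (eqD_transfer h).1 a p' hs⟩

theorem eqD_bisim {p q : Proc A} (h : EqD p q) : Bisim p q :=
  ⟨EqD, isBisim_eqD, h⟩


/- ### Trees -/

inductive T (A : Type) where
  | node : List (A × T A) → T A

namespace T

def children : T A → List (A × T A)
  | node l => l

@[simp] lemma children_node (l : List (A × T A)) : children (node l) = l := rfl

@[simp] lemma node_children (t : T A) : node (children t) = t := by cases t; rfl

theorem sizeOf_lt_of_mem {l : List (A × T A)} {x} (h : x ∈ l) : sizeOf x.2 < 1 + sizeOf l := by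
  induction l with
  | nil => cases h
  | cons y l ih =>
    rcases List.mem_cons.1 h with rfl | h
    · cases x; simp; omega
    · have := ih h; simp at *; omega

def tsize : T A → ℕ
  | node l => (l.attach.map fun x => tsize x.1.2 + 1).sum
decreasing_by simp; exact sizeOf_lt_of_mem x.2

@[simp] lemma tsize_node (l : List (A × T A)) :
    tsize (node l) = (l.map fun x => tsize x.2 + 1).sum := by
  conv_lhs => rw [tsize]
  rw [List.attach_map_val (l := l) (f := fun x => tsize x.2 + 1)]

lemma tsize_nil : tsize (node ([] : List (A × T A))) = 0 := by simp

lemma tsize_cons (x : A × T A) (l : List (A × T A)) :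
    tsize (node (x :: l)) = tsize x.2 + 1 + tsize (node l) := by simp

lemma tsize_append (l1 l2 : List (A × T A)) :
    tsize (node (l1 ++ l2)) = tsize (node l1) + tsize (node l2) := by simp

lemma tsize_lt_of_mem {l : List (A × T A)} {x} (h : x ∈ l) : tsize x.2 < tsize (node l) := by
  induction l with
  | nil => cases h
  | cons y l ih =>
    rcases List.mem_cons.1 h with rfl | h
    · simp; omega
    · have := ih h; simp at *; omega

lemma csize_le_of_mem {l : List (A × T A)} {x} (h : x ∈ l) :
    tsize x.2 + 1 ≤ tsize (node l) := tsize_lt_of_mem h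

def toProc : T A → Proc A
  | node [] => .nil
  | node (x :: l) => .par (.pre x.1 (toProc x.2)) (toProc (node l))
termination_by t => sizeOf t
decreasing_by
  all_goals cases x
  all_goals simp
  all_goals omega

@[simp] lemma toProc_nil : toProc (node ([] : List (A × T A))) = .nil := by rw [toProc]

@[simp] lemma toProc_cons (x : A × T A) (l : List (A × T A)) :
    toProc (node (x :: l)) = .par (.pre x.1 (toProc x.2)) (toProc (node l)) := by rw [toProc]


/- EqD lemmas on trees -/

lemma eqD_append (l1 l2 : List (A × T A)) :
    EqD (toProc (node (l1 ++ l2))) (.par (toProc (node l1)) (toProc (node l2))) := by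
  induction l1 with
  | nil =>
    simp only [List.nil_append, toProc_nil]
    exact .symm (.trans (.parComm _ _) (.parNil _))
  | cons x l ih =>
    simp only [List.cons_append, toProc_cons]
    exact .trans (.congPar (.refl _) ih) (.symm (.parAssoc _ _ _))

lemma eqD_perm {l l' : List (A × T A)} (h : l.Perm l') :
    EqD (toProc (node l)) (toProc (node l')) := by
  induction h with
  | nil => exact .refl _
  | cons x _ ih =>
    simp only [toProc_cons]
    exact .congPar (.refl _) ih
  | swap x y l =>
    simp only [toProc_cons]
    refine .trans (.symm (.parAssoc _ _ _)) (.trans ?_ (.parAssoc _ _ _))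
    exact .congPar (.parComm _ _) (.refl _)
  | trans _ _ ih1 ih2 => exact ih1.trans ih2

lemma eqD_forall2 {l l' : List (A × T A)}
    (h : List.Forall₂ (fun x y => x.1 = y.1 ∧ EqD (toProc x.2) (toProc y.2)) l l') :
    EqD (toProc (node l)) (toProc (node l')) := by
  induction h with
  | nil => exact .refl _
  | cons h _ ih =>
    obtain ⟨h1, h2⟩ := h
    simp only [toProc_cons]
    rw [h1]
    exact .congPar (.congPre _ h2) ih

lemma eqD_replicate (n : ℕ) (x : A × T A) :
    EqD (toProc (node (List.replicate n x))) (Proc.reps n (.pre x.1 (toProc x.2))) := by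
  induction n with
  | zero =>
    simp only [List.replicate_zero, toProc_nil]
    exact .refl _
  | succ n ih =>
    simp only [List.replicate_succ, toProc_cons]
    exact .congPar (.refl _) ih

/- codes -/

variable [Countable A]

noncomputable def enc : A → ℕ := (exists_injective_nat A).choose

lemma enc_inj : Function.Injective (enc (A := A)) := (exists_injective_nat A).choose_spec

noncomputable def code : T A → ℕ
  | node l =>
    Encodable.encode
      ((↑(l.attach.map fun x => Nat.pair (enc x.1.1) (code x.1.2)) : Multiset ℕ))
decreasing_by simp; exact sizeOf_lt_of_mem x.2

noncomputable def cp (x : A × T A) : ℕ := Nat.pair (enc x.1) (code x.2)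

noncomputable def mu (l : List (A × T A)) : Multiset ℕ := ↑(l.map cp)

lemma code_node (l : List (A × T A)) :
    code (node l) = Encodable.encode (mu l) := by
  conv_lhs => rw [code]
  rw [List.attach_map_val (l := l) (f := fun x => Nat.pair (enc x.1) (code x.2))]
  rfl

lemma code_eq_iff {l l' : List (A × T A)} :
    code (node l) = code (node l') ↔ mu l = mu l' := by
  rw [code_node, code_node]
  exact ⟨fun h => Encodable.encode_injective h, fun h => by rw [h]⟩

lemma cp_eq {x y : A × T A} (h : cp x = cp y) :
    x.1 = y.1 ∧ code x.2 = code y.2 := by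
  unfold cp at h
  rw [Nat.pair_eq_pair] at h
  exact ⟨enc_inj h.1, h.2⟩

lemma mu_append (l1 l2 : List (A × T A)) : mu (l1 ++ l2) = mu l1 + mu l2 := by
  simp [mu]

lemma mu_cons (x : A × T A) (l : List (A × T A)) : mu (x :: l) = cp x ::ₘ mu l := by
  simp [mu]

lemma mu_replicate (n : ℕ) (x : A × T A) :
    mu (List.replicate n x) = Multiset.replicate n (cp x) := by
  simp [mu, List.map_replicate, Multiset.coe_replicate]

lemma mem_of_mem_mu {l : List (A × T A)} {z : ℕ} (h : z ∈ mu l) :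
    ∃ x ∈ l, cp x = z := by
  rw [mu, Multiset.mem_coe, List.mem_map] at h
  obtain ⟨x, hx, rfl⟩ := h
  exact ⟨x, hx, rfl⟩

/- matching lemma -/

lemma perm_matching {α β : Type*} {f : α → β} :
    ∀ {l l' : List α}, (l.map f).Perm (l'.map f) →
      ∃ l'', l'.Perm l'' ∧ List.Forall₂ (fun x y => f x = f y) l l'' := by
  intro l
  induction l with
  | nil =>
    intro l' h
    have := h.symm.eq_nil
    simp at this
    exact ⟨[], by simp [this], by simp [this]⟩
  | cons x l ih =>
    intro l' h
    have hmem : f x ∈ l'.map f := h.mem_iff.1 (by simp)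
    rw [List.mem_map] at hmem
    obtain ⟨y, hy, hfy⟩ := hmem
    obtain ⟨s, t, rfl⟩ := List.append_of_mem hy
    have hperm : (s ++ y :: t).Perm (y :: (s ++ t)) := List.perm_middle
    have h2 : (l.map f).Perm ((s ++ t).map f) := by
      have := h.trans (hperm.map f)
      simp only [List.map_cons] at this
      rw [← hfy] at this
      exact this.cons_inv
    obtain ⟨l'', hp, hf⟩ := ih h2
    exact ⟨y :: l'', hperm.trans (hp.cons y), List.Forall₂.cons hfy.symm hf⟩

/- code equality implies EqD -/

lemma tsize_perm {l l' : List (A × T A)} (h : l.Perm l') :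
    tsize (node l) = tsize (node l') := by
  simp only [tsize_node]
  exact (h.map _).sum_eq

lemma tsize_forall2 {l l' : List (A × T A)}
    (h : List.Forall₂ (fun x y => tsize x.2 = tsize y.2) l l') :
    tsize (node l) = tsize (node l') := by
  induction h with
  | nil => rfl
  | cons h _ ih => rw [tsize_cons, tsize_cons, h, ih]

lemma codeEq_aux (n : ℕ) : ∀ (t s : T A), tsize t < n → code t = code s →
    tsize t = tsize s ∧ EqD (toProc t) (toProc s) := by
  induction n with
  | zero => intro t s h; omega
  | succ n ih =>
    rintro ⟨l⟩ ⟨l'⟩ hlt hcode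
    have hmu : mu l = mu l' := code_eq_iff.1 hcode
    have hperm : (l.map cp).Perm (l'.map cp) := by
      rw [← Multiset.coe_eq_coe]; exact hmu
    obtain ⟨l'', hp, hf⟩ := perm_matching hperm
    have hbound : ∀ x ∈ l, tsize x.2 < n := by
      intro x hx
      have := csize_le_of_mem hx
      omega
    have key : List.Forall₂
        (fun (x y : A × T A) => (x.1 = y.1 ∧ EqD (toProc x.2) (toProc y.2)) ∧
          tsize x.2 = tsize y.2) l l'' := by
      clear hperm hmu hcode hlt hp
      induction hf with
      | nil => exact .nil
      | @cons x y l l'' hxy _ ih2 =>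
        obtain ⟨ha, hc⟩ := cp_eq hxy
        obtain ⟨hts, heq⟩ := ih x.2 y.2 (hbound x (by simp)) hc
        exact .cons ⟨⟨ha, heq⟩, hts⟩ (ih2 fun x hx => hbound x (List.mem_cons_of_mem _ hx))
    constructor
    · rw [tsize_perm hp]
      exact tsize_forall2 (key.imp fun _ _ h => h.2)
    · exact .trans (eqD_forall2 (key.imp fun _ _ h => h.1)) (eqD_perm hp.symm)

lemma codeEq {t s : T A} (h : code t = code s) :
    tsize t = tsize s ∧ EqD (toProc t) (toProc s) :=
  codeEq_aux (tsize t + 1) t s (by omega) h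


/- fire: one transition at index i -/

def fire (l : List (A × T A)) (i : Fin l.length) : T A :=
  node ((l.get i).2.children ++ l.eraseIdx i)

lemma perm_get_cons_eraseIdx : ∀ (l : List (A × T A)) (i : Fin l.length),
    l.Perm (l.get i :: l.eraseIdx i)
  | x :: l, ⟨0, _⟩ => by simp
  | x :: l, ⟨i+1, h⟩ => by
    have := perm_get_cons_eraseIdx l ⟨i, by simpa using h⟩
    simp only [List.eraseIdx_cons_succ, List.get_cons_succ]
    exact (this.cons x).trans (List.Perm.swap _ _ _)

lemma tsize_fire (l : List (A × T A)) (i : Fin l.length) :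
    tsize (fire l i) + 1 = tsize (node l) := by
  rw [tsize_perm (perm_get_cons_eraseIdx l i), fire, tsize_append, tsize_cons]
  have : tsize (node (l.get i).2.children) = tsize (l.get i).2 := by
    rw [node_children]
  omega

lemma mu_eq_cons_eraseIdx (l : List (A × T A)) (i : Fin l.length) :
    mu l = cp (l.get i) ::ₘ mu (l.eraseIdx i) := by
  have := (perm_get_cons_eraseIdx l i).map cp
  rw [mu, mu, Multiset.coe_eq_coe.2 this]
  simp

lemma fire_cons_succ (x : A × T A) (l : List (A × T A)) (i : ℕ) (h : i + 1 < (x :: l).length) :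
    fire (x :: l) ⟨i + 1, h⟩ =
      node ((l.get ⟨i, by simpa using h⟩).2.children ++ (x :: l.eraseIdx i)) := by
  simp [fire]

lemma eqD_par_fire (x : A × T A) (l : List (A × T A)) (i : Fin l.length)
    (h : i.1 + 1 < (x :: l).length) :
    EqD (Proc.par (.pre x.1 (toProc x.2)) (toProc (fire l i)))
        (toProc (fire (x :: l) ⟨i.1 + 1, h⟩)) := by
  have h1 : Proc.par (.pre x.1 (toProc x.2)) (toProc (fire l i)) =
      toProc (node (x :: ((l.get i).2.children ++ l.eraseIdx i.1))) := by
    rw [toProc_cons]; rfl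
  rw [h1, fire_cons_succ]
  exact eqD_perm List.perm_middle.symm

lemma step_toProc_inv : ∀ {l : List (A × T A)} {b : A} {q : Proc A},
    Step (toProc (node l)) b q →
    ∃ i : Fin l.length, b = (l.get i).1 ∧ EqD q (toProc (fire l i)) := by
  intro l
  induction l with
  | nil => intro b q h; rw [toProc_nil] at h; cases h
  | cons x l ih =>
    intro b q h
    rw [toProc_cons] at h
    cases h with
    | parL _ h =>
      cases h
      refine ⟨⟨0, by simp⟩, rfl, ?_⟩
      have : EqD (toProc (node (x.2.children ++ l)))
          (.par (toProc (node x.2.children)) (toProc (node l))) := eqD_append _ _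
      rw [node_children] at this
      exact this.symm
    | parR _ h =>
      obtain ⟨i, hb, hq⟩ := ih h
      refine ⟨⟨i.1 + 1, by simpa using i.2⟩, hb, ?_⟩
      exact .trans (.congPar (.refl _) hq) (eqD_par_fire x l i _)

lemma step_toProc_fwd : ∀ (l : List (A × T A)) (i : Fin l.length),
    ∃ q, Step (toProc (node l)) (l.get i).1 q ∧ EqD q (toProc (fire l i)) := by
  intro l
  induction l with
  | nil => intro i; exact absurd i.2 (by simp)
  | cons x l ih =>
    rintro ⟨i, hi⟩
    match i with
    | 0 =>
      refine ⟨.par (toProc x.2) (toProc (node l)), ?_, ?_⟩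
      · rw [toProc_cons]; exact .parL _ .pre
      · have : EqD (toProc (node (x.2.children ++ l)))
            (.par (toProc (node x.2.children)) (toProc (node l))) := eqD_append _ _
        rw [node_children] at this
        exact this.symm
    | i + 1 =>
      obtain ⟨q, hs, hq⟩ := ih ⟨i, by simpa using hi⟩
      refine ⟨.par (.pre x.1 (toProc x.2)) q, ?_, ?_⟩
      · rw [toProc_cons]; exact .parR _ hs
      · exact .trans (.congPar (.refl _) hq) (eqD_par_fire x l ⟨i, by simpa using hi⟩ hi)


/- ### Normal forms -/

def Expandable (a : A) (F : T A) : Prop :=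
  ∃ (G : T A) (n : ℕ), 0 < n ∧
    mu F.children = mu G.children + Multiset.replicate n (cp (a, G))

inductive Normal : T A → Prop where
  | mk (l : List (A × T A)) (h1 : ∀ x ∈ l, Normal x.2)
      (h2 : ∀ x ∈ l, ¬ Expandable x.1 x.2) : Normal (node l)

def NormalL (l : List (A × T A)) : Prop :=
  ∀ x ∈ l, Normal x.2 ∧ ¬ Expandable x.1 x.2

lemma normal_iff {l : List (A × T A)} : Normal (node l) ↔ NormalL l := by
  constructor
  · rintro ⟨_, h1, h2⟩ x hx; exact ⟨h1 x hx, h2 x hx⟩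
  · intro h; exact ⟨l, fun x hx => (h x hx).1, fun x hx => (h x hx).2⟩

lemma normal_children {t : T A} (h : Normal t) : NormalL t.children := by
  cases t with
  | node l => exact normal_iff.1 h

lemma mu_of_code {t s : T A} (h : code t = code s) : mu t.children = mu s.children := by
  cases t; cases s
  exact code_eq_iff.1 h

lemma code_of_mu {t s : T A} (h : mu t.children = mu s.children) : code t = code s := by
  cases t; cases s
  exact code_eq_iff.2 h

lemma tsize_eq_of_cp {x y : A × T A} (h : cp x = cp y) : tsize x.2 = tsize y.2 :=
  (codeEq (cp_eq h).2).1

lemma count_cp_zero {l : List (A × T A)} {c : A × T A}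
    (h : ∀ x ∈ l, tsize x.2 + 1 ≤ tsize c.2) :
    Multiset.count (cp c) (mu l) = 0 := by
  rw [Multiset.count_eq_zero]
  intro hm
  obtain ⟨x, hx, hcp⟩ := mem_of_mem_mu hm
  have := tsize_eq_of_cp hcp
  have := h x hx
  omega

lemma cp_mem_mu {l : List (A × T A)} {c : A × T A} (h : c ∈ l) : cp c ∈ mu l := by
  rw [mu, Multiset.mem_coe, List.mem_map]
  exact ⟨c, h, rfl⟩

lemma children_size {x : A × T A} {t : T A} (hx : x ∈ t.children) :
    tsize x.2 + 1 ≤ tsize t := by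
  have := csize_le_of_mem hx
  rwa [node_children] at this

/- finiteness of toProc -/

lemma toProc_isFin_aux (n : ℕ) : ∀ (t : T A), tsize t < n → (toProc t).IsFin := by
  induction n with
  | zero => intro t h; omega
  | succ n ih =>
    rintro ⟨l⟩ hlt
    induction l with
    | nil => rw [toProc_nil]; trivial
    | cons x l ihl =>
      rw [toProc_cons]
      refine ⟨ih x.2 ?_, ihl ?_⟩
      · have : tsize x.2 + 1 ≤ tsize (node (x :: l)) := csize_le_of_mem (by simp)
        omega
      · rw [tsize_cons] at hlt; omega

lemma toProc_isFin (t : T A) : (toProc t).IsFin :=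
  toProc_isFin_aux (tsize t + 1) t (by omega)

/- expansion -/

lemma exp_child {a : A} {F : T A} (h : Expandable a F) :
    ∃ x : A × T A, ∃ n : ℕ, x ∈ F.children ∧ x.1 = a ∧ 0 < n ∧
      mu F.children = mu x.2.children + Multiset.replicate n (cp x) := by
  obtain ⟨G, n, hn, hmu⟩ := h
  have hmem : cp (a, G) ∈ mu F.children := by
    rw [hmu]
    refine Multiset.mem_add.2 (.inr ?_)
    exact Multiset.mem_replicate.2 ⟨by omega, rfl⟩
  obtain ⟨x, hx, hcp⟩ := mem_of_mem_mu hmem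
  obtain ⟨ha, hcode⟩ := cp_eq hcp
  refine ⟨x, n, hx, ha, hn, ?_⟩
  rw [hmu, mu_of_code hcode, hcp]

open scoped Classical in
noncomputable def expandC (a : A) (F : T A) : List (A × T A) :=
  if h : Expandable a F then
    List.replicate ((exp_child h).choose_spec.choose + 1) (a, (exp_child h).choose.2)
  else [(a, F)]

lemma expandC_normalC {a : A} {F : T A} (hF : Normal F) :
    NormalL (expandC a F) := by
  intro y hy
  classical
  unfold expandC at hy
  split at hy
  · next h =>
    obtain ⟨hx, ha, hn, hmu⟩ := (exp_child h).choose_spec.choose_spec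
    rw [List.mem_replicate] at hy
    rw [hy.2]
    have := normal_children hF _ hx
    rw [ha] at this
    exact this
  · next h =>
    rw [List.mem_singleton] at hy
    rw [hy]
    exact ⟨hF, h⟩

lemma expandC_eqD (a : A) (F : T A) :
    EqD (.pre a (toProc F)) (toProc (node (expandC a F))) := by
  classical
  unfold expandC
  split
  · next h =>
    have hspec := (exp_child h).choose_spec.choose_spec
    revert hspec
    generalize (exp_child h).choose_spec.choose = n
    generalize (exp_child h).choose = x
    rintro ⟨hx, ha, hn, hmu⟩
    subst ha
    have hcode : code F = code (node (x.2.children ++ List.replicate n x)) := by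
      refine code_of_mu ?_
      rw [children_node, mu_append, mu_replicate, hmu]
    have h1 : EqD (toProc F) (toProc (node (x.2.children ++ List.replicate n x))) :=
      (codeEq hcode).2
    have h2 : EqD (toProc (node (x.2.children ++ List.replicate n x)))
        (.par (toProc x.2) (Proc.reps n (.pre x.1 (toProc x.2)))) := by
      refine .trans (eqD_append _ _) ?_
      rw [node_children]
      exact .congPar (.refl _) (eqD_replicate n x)
    have hfin : (toProc x.2).IsFin := toProc_isFin x.2
    have h5 : EqD (toProc (node (List.replicate (n + 1) x)))
        (Proc.reps (n + 1) (.pre x.1 (toProc x.2))) := eqD_replicate (n + 1) x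
    exact .trans (.congPre x.1 (h1.trans h2))
      (.trans (.distr x.1 (toProc x.2) n hfin) h5.symm)
  · next h =>
    rw [toProc_cons, toProc_nil]
    exact .symm (.parNil _)

noncomputable def nf : T A → T A
  | node l => node ((l.attach.map fun x => expandC x.1.1 (nf x.1.2)).flatten)
decreasing_by simp; exact sizeOf_lt_of_mem x.2

lemma nf_node (l : List (A × T A)) :
    nf (node l) = node ((l.map fun x => expandC x.1 (nf x.2)).flatten) := by
  conv_lhs => rw [nf]
  rw [List.attach_map_val (l := l) (f := fun x => expandC x.1 (nf x.2))]

lemma nf_normal_aux (n : ℕ) : ∀ (t : T A), tsize t < n → Normal (nf t) := by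
  induction n with
  | zero => intro t h; omega
  | succ n ih =>
    rintro ⟨l⟩ hlt
    rw [nf_node]
    rw [normal_iff]
    intro y hy
    rw [List.mem_flatten] at hy
    obtain ⟨L, hL, hyL⟩ := hy
    rw [List.mem_map] at hL
    obtain ⟨x, hx, rfl⟩ := hL
    have hx2 : tsize x.2 < n := by
      have := csize_le_of_mem hx
      omega
    exact expandC_normalC (ih x.2 hx2) y hyL

lemma nf_normal (t : T A) : Normal (nf t) := nf_normal_aux (tsize t + 1) t (by omega)

lemma nf_eqd_aux (n : ℕ) : ∀ (t : T A), tsize t < n → EqD (toProc t) (toProc (nf t)) := by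
  induction n with
  | zero => intro t h; omega
  | succ n ih =>
    rintro ⟨l⟩ hlt
    rw [nf_node]
    induction l with
    | nil =>
      simp only [List.map_nil, List.flatten_nil, toProc_nil]
      exact .refl _
    | cons x l ihl =>
      simp only [List.map_cons, List.flatten_cons, toProc_cons]
      refine .trans (.congPar ?_ (ihl ?_)) (eqD_append _ _).symm
      · refine .trans (.congPre _ (ih x.2 ?_)) (expandC_eqD x.1 (nf x.2))
        have := csize_le_of_mem (show x ∈ x :: l by simp)
        omega
      · rw [tsize_cons] at hlt; omega

lemma nf_eqd (t : T A) : EqD (toProc t) (toProc (nf t)) :=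
  nf_eqd_aux (tsize t + 1) t (by omega)


/- size on codes -/

open scoped Classical in
noncomputable def sz (k : ℕ) : ℕ :=
  if h : ∃ p : A × T A, cp p = k then tsize h.choose.2 + 1 else 0

lemma sz_cp (x : A × T A) : sz (A := A) (cp x) = tsize x.2 + 1 := by
  classical
  have h : ∃ p : A × T A, cp p = cp x := ⟨x, rfl⟩
  rw [sz]
  rw [dif_pos h]
  have := tsize_eq_of_cp h.choose_spec
  omega

noncomputable def sig (m : Multiset ℕ) : ℕ := (m.map (sz (A := A))).sum

lemma sig_mu (l : List (A × T A)) : sig (A := A) (mu l) = tsize (node l) := by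
  rw [sig, mu]
  have : (↑(l.map cp) : Multiset ℕ).map (sz (A := A)) = ↑(l.map fun x => tsize x.2 + 1) := by
    rw [Multiset.map_coe, List.map_map]
    congr 1
    apply List.map_congr_left
    intro x _
    exact sz_cp x
  rw [this, Multiset.sum_coe, tsize_node]

lemma sig_add (m n : Multiset ℕ) : sig (A := A) (m + n) = sig (A := A) m + sig (A := A) n := by
  rw [sig, sig, sig, Multiset.map_add, Multiset.sum_add]

lemma sig_pos {m : Multiset ℕ} {z : ℕ} (hz : z ∈ m) (hw : ∃ p : A × T A, cp p = z) :
    1 ≤ sig (A := A) m := by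
  obtain ⟨p, rfl⟩ := hw
  have h1 : sz (A := A) (cp p) ∈ m.map (sz (A := A)) := Multiset.mem_map_of_mem _ hz
  have h2 : sz (A := A) (cp p) ≤ (m.map (sz (A := A))).sum :=
    Multiset.single_le_sum (fun x _ => Nat.zero_le x) _ h1
  rw [sz_cp] at h2
  rw [sig]
  omega

/- normality of fire -/

lemma normalL_fire {l : List (A × T A)} (h : NormalL l) (i : Fin l.length) :
    NormalL ((l.get i).2.children ++ l.eraseIdx i) := by
  intro x hx
  rcases List.mem_append.1 hx with hx | hx
  · exact normal_children (h _ (List.get_mem l i)).1 x hx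
  · exact h x ((List.eraseIdx_sublist l i).subset hx)

/- ### the key combinatorial lemma -/

theorem keyStep {M N : List (A × T A)}
    (ih : ∀ M' N' : List (A × T A),
      tsize (node M') + tsize (node N') < tsize (node M) + tsize (node N) →
      NormalL M' → NormalL N' →
      Bisim (toProc (node M')) (toProc (node N')) → mu M' = mu N')
    (hM : NormalL M) (hN : NormalL N)
    (hB : Bisim (toProc (node M)) (toProc (node N)))
    {c : A × T A} (hc : c ∈ M)
    (hmax : ∀ x ∈ M ++ N, tsize x.2 ≤ tsize c.2) :
    mu M = mu N ∨
      ((mu N).count (cp c) + 1 = (mu M).count (cp c) ∧ 2 ≤ (mu M).count (cp c)) := by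
  obtain ⟨i, hi⟩ := List.mem_iff_get.1 hc
  obtain ⟨q, hs, hq⟩ := step_toProc_fwd M i
  obtain ⟨q', hs', hBq⟩ := bisim_step hB hs
  obtain ⟨j, hbj, hq'⟩ := step_toProc_inv hs'
  have hdN : N.get j ∈ N := List.get_mem N j
  have hBf : Bisim (toProc (fire M i)) (toProc (fire N j)) :=
    bisim_trans (bisim_symm (eqD_bisim hq)) (bisim_trans hBq (eqD_bisim hq'))
  have hE : mu ((M.get i).2.children ++ M.eraseIdx i)
      = mu ((N.get j).2.children ++ N.eraseIdx j) := by
    refine ih _ _ ?_ (normalL_fire hM i) (normalL_fire hN j) hBf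
    have h1 := tsize_fire M i
    have h2 := tsize_fire N j
    rw [fire] at h1 h2
    omega
  rw [hi] at hE
  rw [mu_append, mu_append] at hE
  have hMX : mu M = cp c ::ₘ mu (M.eraseIdx i) := by
    rw [mu_eq_cons_eraseIdx M i, hi]
  have hNY : mu N = cp (N.get j) ::ₘ mu (N.eraseIdx j) := mu_eq_cons_eraseIdx N j
  have hc1 : c.1 = (N.get j).1 := by rw [← hi]; exact hbj
  have hMF0 : (mu c.2.children).count (cp c) = 0 :=
    count_cp_zero (fun x hx => children_size hx)
  have hdsz : tsize (N.get j).2 ≤ tsize c.2 := hmax _ (List.mem_append.2 (.inr hdN))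
  have hMG0 : (mu (N.get j).2.children).count (cp c) = 0 :=
    count_cp_zero (fun x hx => le_trans (children_size hx) hdsz)
  by_cases hdc : cp (N.get j) = cp c
  · -- matched by the same component: conclude mu M = mu N
    left
    have hmuch : mu c.2.children = mu (N.get j).2.children :=
      (mu_of_code (cp_eq hdc).2).symm
    rw [hmuch] at hE
    have hXY : mu (M.eraseIdx i) = mu (N.eraseIdx j) := by
      exact add_left_cancel hE
    rw [hMX, hNY, hdc, hXY]
  · -- matched by a different component
    have hcX : (mu (M.eraseIdx i)).count (cp c) = (mu (N.eraseIdx j)).count (cp c) := by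
      have h0 := congrArg (Multiset.count (cp c)) hE
      rw [Multiset.count_add, Multiset.count_add, hMF0, hMG0] at h0
      omega
    have hm1 : (mu M).count (cp c) = (mu (M.eraseIdx i)).count (cp c) + 1 := by
      rw [hMX, Multiset.count_cons_self]
    have hn0 : (mu N).count (cp c) = (mu (N.eraseIdx j)).count (cp c) := by
      rw [hNY, Multiset.count_cons_of_ne (fun h => hdc h.symm)]
    by_cases hm : 2 ≤ (mu M).count (cp c)
    · right
      exact ⟨by omega, hm⟩
    · exfalso
      have hcmem : cp c ∈ mu M := cp_mem_mu hc
      have hcm : (mu M).count (cp c) = 1 := by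
        have := Multiset.count_pos.2 hcmem
        omega
      have hX0 : (mu (M.eraseIdx i)).count (cp c) = 0 := by omega
      have hY0 : (mu (N.eraseIdx j)).count (cp c) = 0 := by omega
      have hN0 : (mu N).count (cp c) = 0 := by omega
      -- multiset bookkeeping
      set MF := mu c.2.children with hMFdef
      set MG := mu (N.get j).2.children with hMGdef
      set X := mu (M.eraseIdx i) with hXdef
      set Y := mu (N.eraseIdx j) with hYdef
      set M₀ := X - Y with hM₀def
      set N₀ := Y - X with hN₀def
      set H := MF - N₀ with hHdef
      have hEz : ∀ z, MF.count z + X.count z = MG.count z + Y.count z := by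
        intro z
        have := congrArg (Multiset.count z) hE
        rwa [Multiset.count_add, Multiset.count_add] at this
      have hMF_eq : MF = H + N₀ := by
        refine Multiset.ext.2 fun z => ?_
        have := hEz z
        simp only [hHdef, hN₀def, Multiset.count_add, Multiset.count_sub]
        omega
      have hMG_eq : MG = H + M₀ := by
        refine Multiset.ext.2 fun z => ?_
        have := hEz z
        simp only [hHdef, hN₀def, hM₀def, Multiset.count_add, Multiset.count_sub]
        omega
      have hsigMF : sig (A := A) MF = tsize c.2 := by
        rw [hMFdef, sig_mu, node_children]
      have hsigMG : sig (A := A) MG = tsize (N.get j).2 := by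
        rw [hMGdef, sig_mu, node_children]
      have hM₀MG : M₀ ≤ MG := by rw [hMG_eq]; exact le_add_self
      have hM₀sig : M₀ ≠ 0 → 1 ≤ sig (A := A) M₀ := by
        intro h0
        obtain ⟨z, hz⟩ := Multiset.exists_mem_of_ne_zero h0
        have hzMG : z ∈ MG := Multiset.mem_of_le hM₀MG hz
        obtain ⟨v, _, hcpv⟩ := mem_of_mem_mu hzMG
        exact sig_pos hz ⟨v, hcpv⟩
      have hN₀ne : N₀ ≠ 0 := by
        intro h0
        apply hdc
        have hM₀0 : M₀ = 0 := by
          by_contra hM₀ne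
          have h1 : sig (A := A) MG = sig (A := A) H + sig (A := A) M₀ := by
            rw [hMG_eq, sig_add]
          have h2 : sig (A := A) MF = sig (A := A) H := by
            rw [hMF_eq, h0, sig_add]
            simp [sig]
          have := hM₀sig hM₀ne
          omega
        have hMFMG : MF = MG := by
          rw [hMF_eq, hMG_eq, h0, hM₀0]
        have hcode : code (N.get j).2 = code c.2 := by
          refine code_of_mu ?_
          exact hMFMG.symm
        show cp (N.get j) = cp c
        rw [cp, cp, hcode, ← hc1]
      -- every element of N₀ is cp (N.get j)
      have hstep6 : ∀ z ∈ N₀, z = cp (N.get j) := by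
        intro z hz
        have hzY : z ∈ Y := Multiset.mem_of_le (tsub_le_self) hz
        obtain ⟨e, he, hcpe⟩ := mem_of_mem_mu hzY
        have heN : e ∈ N := (List.eraseIdx_sublist N j).subset he
        obtain ⟨k, hk⟩ := List.mem_iff_get.1 heN
        obtain ⟨q₂, hs₂, hq₂⟩ := step_toProc_fwd N k
        obtain ⟨q₂', hs₂', hBq₂⟩ := bisim_step (bisim_symm hB) hs₂
        obtain ⟨i₂, hb₂, hq₂'⟩ := step_toProc_inv hs₂'
        have hBf₂ : Bisim (toProc (fire N k)) (toProc (fire M i₂)) :=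
          bisim_trans (bisim_symm (eqD_bisim hq₂)) (bisim_trans hBq₂ (eqD_bisim hq₂'))
        have hE₂ : mu ((N.get k).2.children ++ N.eraseIdx k)
            = mu ((M.get i₂).2.children ++ M.eraseIdx i₂) := by
          refine ih _ _ ?_ (normalL_fire hN k) (normalL_fire hM i₂) hBf₂
          have h1 := tsize_fire N k
          have h2 := tsize_fire M i₂
          rw [fire] at h1 h2
          omega
        rw [hk] at hE₂
        rw [mu_append, mu_append] at hE₂
        have hNk : mu N = cp e ::ₘ mu (N.eraseIdx k) := by
          rw [mu_eq_cons_eraseIdx N k, hk]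
        have he_sz : tsize e.2 ≤ tsize c.2 := hmax _ (List.mem_append.2 (.inr heN))
        have hEch0 : (mu e.2.children).count (cp c) = 0 :=
          count_cp_zero (fun x hx => le_trans (children_size hx) he_sz)
        have hNk0 : (mu (N.eraseIdx k)).count (cp c) = 0 := by
          have := congrArg (Multiset.count (cp c)) hNk
          rw [Multiset.count_cons] at this
          omega
        have hMi₂ : mu M = cp (M.get i₂) ::ₘ mu (M.eraseIdx i₂) := mu_eq_cons_eraseIdx M i₂
        have hcpc₂ : cp (M.get i₂) = cp c := by
          by_contra hne
          have h1 := congrArg (Multiset.count (cp c)) hMi₂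
          rw [Multiset.count_cons_of_ne (fun h => hne h.symm)] at h1
          have h2 := congrArg (Multiset.count (cp c)) hE₂
          rw [Multiset.count_add, Multiset.count_add, hEch0, hNk0] at h2
          omega
        have hXX : mu (M.eraseIdx i₂) = X := by
          have h1 : cp (M.get i₂) ::ₘ mu (M.eraseIdx i₂) = cp c ::ₘ X := by
            rw [← hMi₂, hMX]
          rw [hcpc₂] at h1
          exact (Multiset.cons_inj_right _).1 h1
        have hMF₂ : mu (M.get i₂).2.children = MF := mu_of_code (cp_eq hcpc₂).2
        rw [hXX, hMF₂, hE] at hE₂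
        -- hE₂ : mu e.2.children + mu (N.eraseIdx k) = MG + Y
        -- hNk & hNY : cp e ::ₘ mu (N.eraseIdx k) = cp (N.get j) ::ₘ Y
        have hcons : cp e ::ₘ mu (N.eraseIdx k) = cp (N.get j) ::ₘ Y := by
          rw [← hNk, hNY]
        have hkey2 : cp (N.get j) ::ₘ mu e.2.children = cp e ::ₘ MG := by
          have h1 : mu e.2.children + (cp e ::ₘ mu (N.eraseIdx k))
              = cp e ::ₘ (MG + Y) := by
            rw [Multiset.add_cons, hE₂]
          rw [hcons] at h1
          have h2 : (cp (N.get j) ::ₘ mu e.2.children) + Y = (cp e ::ₘ MG) + Y := by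
            have : mu e.2.children + (cp (N.get j) ::ₘ Y)
                = (cp (N.get j) ::ₘ mu e.2.children) + Y := by
              rw [Multiset.add_cons, Multiset.cons_add]
            rw [← this, h1, Multiset.cons_add]
          exact add_right_cancel h2
        by_cases hed : cp e = cp (N.get j)
        · rw [← hcpe, hed]
        · exfalso
          have h1 := congrArg (Multiset.count (cp (N.get j))) hkey2
          rw [Multiset.count_cons_self, Multiset.count_cons_of_ne (fun h => hed h.symm)] at h1
          have h2 : cp (N.get j) ∈ MG := by
            rw [← Multiset.count_pos]
            omega
          obtain ⟨v, hv, hcpv⟩ := mem_of_mem_mu h2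
          have := tsize_eq_of_cp hcpv
          have := children_size hv
          omega
      -- M₀ = 0
      have hM₀0 : M₀ = 0 := by
        by_contra h0
        obtain ⟨z, hz⟩ := Multiset.exists_mem_of_ne_zero h0
        have hzX : z ∈ X := Multiset.mem_of_le (tsub_le_self) hz
        have hzMG : z ∈ MG := Multiset.mem_of_le hM₀MG hz
        obtain ⟨f, hf, hcpf⟩ := mem_of_mem_mu hzX
        obtain ⟨v, hv, hcpv⟩ := mem_of_mem_mu hzMG
        have hsf : tsize f.2 = tsize v.2 := tsize_eq_of_cp (by rw [hcpf, ← hcpv])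
        have hsv : tsize v.2 + 1 ≤ tsize (N.get j).2 := children_size hv
        have hfc : cp f ≠ cp c := by
          intro hh
          have := tsize_eq_of_cp hh
          omega
        have hfM : f ∈ M := (List.eraseIdx_sublist M i).subset hf
        obtain ⟨k', hk'⟩ := List.mem_iff_get.1 hfM
        obtain ⟨q₃, hs₃, hq₃⟩ := step_toProc_fwd M k'
        obtain ⟨q₃', hs₃', hBq₃⟩ := bisim_step hB hs₃
        obtain ⟨j₂, hb₃, hq₃'⟩ := step_toProc_inv hs₃'
        have hBf₃ : Bisim (toProc (fire M k')) (toProc (fire N j₂)) :=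
          bisim_trans (bisim_symm (eqD_bisim hq₃)) (bisim_trans hBq₃ (eqD_bisim hq₃'))
        have hE₃ : mu ((M.get k').2.children ++ M.eraseIdx k')
            = mu ((N.get j₂).2.children ++ N.eraseIdx j₂) := by
          refine ih _ _ ?_ (normalL_fire hM k') (normalL_fire hN j₂) hBf₃
          have h1 := tsize_fire M k'
          have h2 := tsize_fire N j₂
          rw [fire] at h1 h2
          omega
        rw [hk'] at hE₃
        rw [mu_append, mu_append] at hE₃
        have hf_sz : tsize f.2 ≤ tsize c.2 := hmax _ (List.mem_append.2 (.inl hfM))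
        have hfch0 : (mu f.2.children).count (cp c) = 0 :=
          count_cp_zero (fun x hx => le_trans (children_size hx) hf_sz)
        have hMk' : mu M = cp f ::ₘ mu (M.eraseIdx k') := by
          rw [mu_eq_cons_eraseIdx M k', hk']
        have hMk1 : (mu (M.eraseIdx k')).count (cp c) = 1 := by
          have := congrArg (Multiset.count (cp c)) hMk'
          rw [Multiset.count_cons_of_ne (fun h => hfc h.symm)] at this
          omega
        have hNj₂ : mu N = cp (N.get j₂) ::ₘ mu (N.eraseIdx j₂) := mu_eq_cons_eraseIdx N j₂
        have hNj₂0 : (mu (N.eraseIdx j₂)).count (cp c) = 0 := by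
          have := congrArg (Multiset.count (cp c)) hNj₂
          rw [Multiset.count_cons] at this
          omega
        have h2 := congrArg (Multiset.count (cp c)) hE₃
        rw [Multiset.count_add, Multiset.count_add, hfch0, hNj₂0, hMk1] at h2
        have h3 : cp c ∈ mu (N.get j₂).2.children := by
          rw [← Multiset.count_pos]
          omega
        obtain ⟨w, hw, hcpw⟩ := mem_of_mem_mu h3
        have h4 := tsize_eq_of_cp hcpw
        have h5 := children_size hw
        have h6 : tsize (N.get j₂).2 ≤ tsize c.2 :=
          hmax _ (List.mem_append.2 (.inr (List.get_mem N j₂)))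
        omega
      -- conclude: c is expandable, contradiction
      have hp : 0 < Multiset.card N₀ := Multiset.card_pos.2 hN₀ne
      have hN₀rep : N₀ = Multiset.replicate (Multiset.card N₀) (cp (N.get j)) :=
        Multiset.eq_replicate_card.2 hstep6
      refine (hM c hc).2 ⟨(N.get j).2, Multiset.card N₀, hp, ?_⟩
      have hcpdj : cp (c.1, (N.get j).2) = cp (N.get j) := by
        rw [cp, cp, hc1]
      rw [hcpdj, ← hMFdef, ← hMGdef]
      rw [hMF_eq, hMG_eq, hM₀0, ← hN₀rep]
      simp


lemma bisim_nil_nil {K : List (A × T A)} (h : Bisim Proc.nil (toProc (node K))) :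
    K = [] := by
  cases K with
  | nil => rfl
  | cons x K =>
    exfalso
    obtain ⟨q, hs, _⟩ := step_toProc_fwd (x :: K) ⟨0, by simp⟩
    obtain ⟨q', hs', _⟩ := bisim_step (bisim_symm h) hs
    cases hs'

lemma exists_max (l : List (A × T A)) (h : l ≠ []) :
    ∃ c ∈ l, ∀ x ∈ l, tsize x.2 ≤ tsize c.2 := by
  induction l with
  | nil => exact absurd rfl h
  | cons x l ih =>
    cases l with
    | nil => exact ⟨x, by simp⟩
    | cons y l =>
      obtain ⟨c, hc, hmax⟩ := ih (by simp)
      by_cases hcx : tsize c.2 ≤ tsize x.2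
      · refine ⟨x, by simp, ?_⟩
        intro z hz
        rcases List.mem_cons.1 hz with rfl | hz
        · exact le_refl _
        · exact le_trans (hmax z hz) hcx
      · refine ⟨c, List.mem_cons_of_mem _ hc, ?_⟩
        intro z hz
        rcases List.mem_cons.1 hz with rfl | hz
        · omega
        · exact hmax z hz

theorem uniq : ∀ (n : ℕ) (M N : List (A × T A)),
    tsize (node M) + tsize (node N) ≤ n → NormalL M → NormalL N →
    Bisim (toProc (node M)) (toProc (node N)) → mu M = mu N := by
  intro n
  induction n using Nat.strong_induction_on with
  | _ n ih =>
    intro M N hsz hM hN hB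
    by_cases hM0 : M = []
    · subst hM0
      rw [toProc_nil] at hB
      rw [bisim_nil_nil hB]
    by_cases hN0 : N = []
    · subst hN0
      rw [toProc_nil] at hB
      rw [bisim_nil_nil (bisim_symm hB)]
    have ihk : ∀ M' N' : List (A × T A),
        tsize (node M') + tsize (node N') < tsize (node M) + tsize (node N) →
        NormalL M' → NormalL N' →
        Bisim (toProc (node M')) (toProc (node N')) → mu M' = mu N' := by
      intro M' N' hlt hM' hN' hB'
      exact ih (tsize (node M') + tsize (node N')) (by omega) M' N' le_rfl hM' hN' hB'
    have ihk' : ∀ M' N' : List (A × T A),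
        tsize (node M') + tsize (node N') < tsize (node N) + tsize (node M) →
        NormalL M' → NormalL N' →
        Bisim (toProc (node M')) (toProc (node N')) → mu M' = mu N' := by
      intro M' N' hlt hM' hN' hB'
      exact ih (tsize (node M') + tsize (node N')) (by omega) M' N' le_rfl hM' hN' hB'
    obtain ⟨c, hcmem, hmax⟩ := exists_max (M ++ N) (by simp [hM0])
    have hmax' : ∀ x ∈ N ++ M, tsize x.2 ≤ tsize c.2 := by
      intro x hx
      refine hmax x ?_
      rcases List.mem_append.1 hx with hx | hx
      · exact List.mem_append.2 (.inr hx)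
      · exact List.mem_append.2 (.inl hx)
    rcases List.mem_append.1 hcmem with hcM | hcN
    · rcases keyStep ihk hM hN hB hcM hmax with h | ⟨hcount, h2⟩
      · exact h
      · -- cp c occurs in N as well; use the symmetric argument
        have hcN' : cp c ∈ mu N := by
          rw [← Multiset.count_pos]
          omega
        obtain ⟨c', hc', hcpc'⟩ := mem_of_mem_mu hcN'
        have hsz' : tsize c'.2 = tsize c.2 := tsize_eq_of_cp hcpc'
        have hmax'' : ∀ x ∈ N ++ M, tsize x.2 ≤ tsize c'.2 := by
          rw [hsz']; exact hmax'
        rcases keyStep ihk' hN hM (bisim_symm hB) hc' hmax'' with h | ⟨hcount', _⟩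
        · exact h.symm
        · exfalso
          rw [hcpc'] at hcount'
          omega
    · rcases keyStep ihk' hN hM (bisim_symm hB) hcN hmax' with h | ⟨hcount, h2⟩
      · exact h.symm
      · have hcM' : cp c ∈ mu M := by
          rw [← Multiset.count_pos]
          omega
        obtain ⟨c', hc', hcpc'⟩ := mem_of_mem_mu hcM'
        have hsz' : tsize c'.2 = tsize c.2 := tsize_eq_of_cp hcpc'
        have hmax'' : ∀ x ∈ M ++ N, tsize x.2 ≤ tsize c'.2 := by
          rw [hsz']; exact hmax
        rcases keyStep ihk hM hN hB hc' hmax'' with h | ⟨hcount', _⟩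
        · exact h
        · exfalso
          rw [hcpc'] at hcount'
          omega

theorem normal_bisim_eqD {t s : T A} (ht : Normal t) (hs : Normal s)
    (hB : Bisim (toProc t) (toProc s)) : EqD (toProc t) (toProc s) := by
  obtain ⟨l⟩ := t
  obtain ⟨l'⟩ := s
  have hmu : mu l = mu l' :=
    uniq (tsize (node l) + tsize (node l')) l l' le_rfl
      (normal_iff.1 ht) (normal_iff.1 hs) hB
  exact (codeEq (code_eq_iff.2 hmu)).2

end T

/- ### ofProc -/

open T in
def ofProc : Proc A → T A
  | .nil => node []
  | .pre a p => node [(a, ofProc p)]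
  | .par p q => node ((ofProc p).children ++ (ofProc q).children)
  | .repl _ _ => node []

open T in
lemma ofProc_eqd : ∀ {p : Proc A}, p.IsFin → EqD (toProc (ofProc p)) p := by
  intro p
  induction p with
  | nil =>
    intro _
    rw [show ofProc (.nil : Proc A) = node [] from rfl, toProc_nil]
    exact .refl _
  | pre a p ih =>
    intro h
    rw [show ofProc (.pre a p) = node [(a, ofProc p)] from rfl, toProc_cons, toProc_nil]
    exact (EqD.parNil _).trans (.congPre a (ih h))
  | par p q ih1 ih2 =>
    intro h
    obtain ⟨h1, h2⟩ := h
    rw [show ofProc (.par p q) = node ((ofProc p).children ++ (ofProc q).children) from rfl]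
    refine (eqD_append _ _).trans ?_
    rw [node_children, node_children]
    exact .congPar (ih1 h1) (ih2 h2)
  | repl a p ih => intro h; exact absurd h (by simp [Proc.IsFin])

open T in
theorem bisim_eqD_of_fin {F F' : Proc A} [Countable A]
    (hF : F.IsFin) (hF' : F'.IsFin) (h : Bisim F F') : EqD F F' := by
  have e1 : EqD F (toProc (nf (ofProc F))) :=
    (ofProc_eqd hF).symm.trans (nf_eqd (ofProc F))
  have e2 : EqD F' (toProc (nf (ofProc F'))) :=
    (ofProc_eqd hF').symm.trans (nf_eqd (ofProc F'))
  have hB : Bisim (toProc (nf (ofProc F))) (toProc (nf (ofProc F'))) :=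
    bisim_trans (bisim_symm (eqD_bisim e1)) (bisim_trans h (eqD_bisim e2))
  have hcode := normal_bisim_eqD (nf_normal (ofProc F)) (nf_normal (ofProc F')) hB
  exact e1.trans (hcode.trans e2.symm)

end CCS

/-- On finite processes, `≡D` coincides with strong bisimilarity. -/
theorem eqD_iff_bisim_of_finite {A : Type} [Countable A]
    (F F' : CCS.Proc A) (hF : F.IsFin) (hF' : F'.IsFin) :
    CCS.EqD F F' ↔ CCS.Bisim F F' :=
  ⟨CCS.eqD_bisim, CCS.bisim_eqD_of_fin hF hF'⟩
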